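/- Let M ⊆ ℤ² be the set M = {(k,k) : k ∈ ℕ} ∪ {(k,1) : k ∈ ℕ} (the nonnegative diagonal together with the nonnegative horizontal line at height 1). Then for all sufficiently large n, the n² blocks M_{(i,j),n} with i, j ∈ {−n+1, …, 0} are pairwise distinct; in particular p_M(n) ≥ n² for all sufficiently large n. -/

import Mathlib

open Classical

noncomputable section

/-- Sup norm of an integer vector. -/
def supNorm {ι : Type} [Fintype ι] (x : ι → ℤ) : ℕ :=
  Finset.univ.sup fun i => (x i).natAbs

/-- The block of size `n` of `M` at `x`. -/
def blockOf {ι : Type} [Fintype ι] (M : Set (ι → ℤ)) (x : ι → ℤ) (n : ℕ) :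
    (ι → Fin n) → Prop :=
  fun w => (fun i => x i + (w i : ℤ)) ∈ M

/-- A block is recurrent if it occurs at points of arbitrarily large norm. -/
def IsRecurrentBlock {ι : Type} [Fintype ι] (M : Set (ι → ℤ)) (n : ℕ)
    (B : (ι → Fin n) → Prop) : Prop :=
  ∀ L : ℕ, ∃ x : ι → ℤ, L ≤ supNorm x ∧ blockOf M x n = B

/-- `R_M(n)`: number of distinct recurrent blocks of size `n`. -/
def recBlockCount {ι : Type} [Fintype ι] (M : Set (ι → ℤ)) (n : ℕ) : ℕ :=
  Set.ncard {B : (ι → Fin n) → Prop | IsRecurrentBlock M n B}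

/-- `p_M(n)`: number of distinct blocks of size `n`. -/
def blockCount {ι : Type} [Fintype ι] (M : Set (ι → ℤ)) (n : ℕ) : ℕ :=
  Set.ncard {B : (ι → Fin n) → Prop | ∃ x, blockOf M x n = B}

/-- Linear subset of `ℤ^ι`. -/
def IsLinearSetInt {ι : Type} [Fintype ι] (S : Set (ι → ℤ)) : Prop :=
  ∃ (x : ι → ℤ) (V : Finset (ι → ℤ)),
    S = {y | ∃ c : (ι → ℤ) → ℕ, y = x + ∑ v ∈ V, (c v : ℤ) • v}

/-- Semilinear = finite union of linear sets. -/
def IsSemilinearSetInt {ι : Type} [Fintype ι] (S : Set (ι → ℤ)) : Prop :=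
  ∃ F : Finset (Set (ι → ℤ)), (∀ T ∈ F, IsLinearSetInt T) ∧ S = ⋃ T ∈ F, T

/-- Section `M_{i,c}` of a subset of `ℤ^(d+1)`. -/
def sectionSet {d : ℕ} (M : Set (Fin (d + 1) → ℤ)) (i : Fin (d + 1)) (c : ℤ) :
    Set (Fin d → ℤ) :=
  {y | i.insertNth c y ∈ M}

/-- Open ball (for the sup norm) of radius `K` centered at `x`. -/
def ball {ι : Type} [Fintype ι] (x : ι → ℤ) (K : ℕ) : Set (ι → ℤ) :=
  {y | supNorm (x - y) < K}

/-- `M` is `v`-periodic inside `X`. -/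
def vPeriodicInside {ι : Type} [Fintype ι] (M : Set (ι → ℤ)) (v : ι → ℤ)
    (X : Set (ι → ℤ)) : Prop :=
  ∀ m : ι → ℤ, m ∈ X → m + v ∈ X → (m ∈ M ↔ m + v ∈ M)

/-- Border of `A` in direction `v`. -/
def border {ι : Type} (A : Set (ι → ℤ)) (v : ι → ℤ) : Set (ι → ℤ) :=
  {x | x ∈ A ∧ x + v ∉ A}

/-- `(d-k)`-dimensional section of `M ⊆ ℤ^d` obtained by fixing the coordinates
in the range of `g` to the corresponding constants `c`. -/
def multiSection {d k : ℕ} (M : Set (Fin d → ℤ)) (g : Fin k → Fin d)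
    (c : Fin k → ℤ) : Set ({j : Fin d // ∀ m, g m ≠ j} → ℤ) :=
  {y | (fun j : Fin d =>
    if h : ∃ m, g m = j then c (Classical.choose h)
    else y ⟨j, fun m hm => h ⟨m, hm⟩⟩) ∈ M}

/-- Repetitivity of a subset of `ℤ^ι`. -/
def Repetitive {ι : Type} [Fintype ι] (M : Set (ι → ℤ)) : Prop :=
  ∀ n : ℕ, 1 ≤ n → ∃ R : ℕ, ∀ x y : ι → ℤ, ∃ z : ι → ℤ,
    supNorm (z - y) ≤ R ∧ blockOf M z n = blockOf M x n

/-- Ideal crystal: `d` linearly independent translation periods. -/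
def IsIdealCrystal {d : ℕ} (M : Set (Fin d → ℤ)) : Prop :=
  ∃ p : Fin d → (Fin d → ℤ), LinearIndependent ℤ p ∧
    ∀ i, (fun x => x + p i) '' M = M

/-- The set of Example 1: the nonnegative diagonal together with the
nonnegative horizontal line at height `1`. -/
def diagLineSet : Set (Fin 2 → ℤ) :=
  {x | (∃ k : ℕ, x 0 = (k : ℤ) ∧ x 1 = (k : ℤ)) ∨
       (∃ k : ℕ, x 0 = (k : ℤ) ∧ x 1 = 1)}

/-- For all sufficiently large `n`, the `n²` blocks `M_{(i,j),n}` with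
`i,j ∈ {-n+1,…,0}` are pairwise distinct; in particular `p_M(n) ≥ n²`. -/
theorem diagLine_blockCount_ge : ∃ N : ℕ, ∀ n : ℕ, N ≤ n →
    (∀ y₁ y₂ : Fin 2 → ℤ,
      (∀ t, -(n : ℤ) + 1 ≤ y₁ t ∧ y₁ t ≤ 0) →
      (∀ t, -(n : ℤ) + 1 ≤ y₂ t ∧ y₂ t ≤ 0) →
      blockOf diagLineSet y₁ n = blockOf diagLineSet y₂ n → y₁ = y₂) ∧
    n ^ 2 ≤ blockCount diagLineSet n := by
  refine ⟨1, fun n hn => ?_⟩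
  have key : ∀ y₁ y₂ : Fin 2 → ℤ,
      (∀ t, -(n : ℤ) + 1 ≤ y₁ t ∧ y₁ t ≤ 0) →
      (∀ t, -(n : ℤ) + 1 ≤ y₂ t ∧ y₂ t ≤ 0) →
      blockOf diagLineSet y₁ n = blockOf diagLineSet y₂ n → y₁ = y₂ := by
    intro y₁ y₂ h1 h2 heq
    have mem_of : ∀ (ya yb : Fin 2 → ℤ), (∀ t, -(n : ℤ) + 1 ≤ ya t ∧ ya t ≤ 0) →
        blockOf diagLineSet ya n = blockOf diagLineSet yb n →
        ((∃ k : ℕ, yb 0 - ya 0 = (k : ℤ) ∧ yb 1 - ya 1 = (k : ℤ)) ∨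
         (∃ k : ℕ, yb 0 - ya 0 = (k : ℤ) ∧ yb 1 - ya 1 = 1)) := by
      intro ya yb ha hq
      have hw : ∀ t : Fin 2, (-(ya t)).toNat < n := by
        intro t; have := ha t; omega
      set w : Fin 2 → Fin n := fun t => ⟨(-(ya t)).toNat, hw t⟩ with hwdef
      have hval : ∀ t, ((w t : ℕ) : ℤ) = -(ya t) := by
        intro t; have := ha t; simp only [hwdef]; omega
      have hmem : blockOf diagLineSet ya n w := by
        show (fun i => ya i + ((w i : ℕ) : ℤ)) ∈ diagLineSet
        simp only [diagLineSet, Set.mem_setOf_eq]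
        left
        exact ⟨0, by simp [hval 0], by simp [hval 1]⟩
      rw [hq] at hmem
      have hmem' : (fun i => yb i + ((w i : ℕ) : ℤ)) ∈ diagLineSet := hmem
      simp only [diagLineSet, Set.mem_setOf_eq, hval 0, hval 1] at hmem'
      obtain ⟨k, hk1, hk2⟩ | ⟨k, hk1, hk2⟩ := hmem'
      · left; exact ⟨k, by omega, by omega⟩
      · right; exact ⟨k, by omega, by omega⟩
    have hA := mem_of y₁ y₂ h1 heq
    have hB := mem_of y₂ y₁ h2 heq.symm
    have e0 : y₁ 0 = y₂ 0 ∧ y₁ 1 = y₂ 1 := by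
      obtain ⟨k, hk1, hk2⟩ | ⟨k, hk1, hk2⟩ := hA <;>
        obtain ⟨m, hm1, hm2⟩ | ⟨m, hm1, hm2⟩ := hB <;> constructor <;> omega
    funext t
    fin_cases t
    · exact e0.1
    · exact e0.2
  refine ⟨key, ?_⟩
  have hfin : {B : (Fin 2 → Fin n) → Prop | ∃ x, blockOf diagLineSet x n = B}.Finite :=
    Set.toFinite _
  set f : Fin n × Fin n → ((Fin 2 → Fin n) → Prop) :=
    fun p => blockOf diagLineSet ![-((p.1 : ℕ) : ℤ), -((p.2 : ℕ) : ℤ)] n with hf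
  have hbound : ∀ p : Fin n × Fin n, ∀ t : Fin 2,
      -(n : ℤ) + 1 ≤ (![-((p.1 : ℕ) : ℤ), -((p.2 : ℕ) : ℤ)] : Fin 2 → ℤ) t ∧
      (![-((p.1 : ℕ) : ℤ), -((p.2 : ℕ) : ℤ)] : Fin 2 → ℤ) t ≤ 0 := by
    intro p t
    have h1 := p.1.isLt
    have h2 := p.2.isLt
    fin_cases t <;> simp <;> omega
  have hinj : Function.Injective f := by
    intro p q hpq
    have := key _ _ (hbound p) (hbound q) hpq
    have e0 := congrFun this 0
    have e1 := congrFun this 1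
    simp only [Matrix.cons_val_zero, Matrix.cons_val_one, Matrix.head_cons, neg_inj,
      Nat.cast_inj] at e0 e1
    exact Prod.ext (Fin.val_injective e0) (Fin.val_injective e1)
  have hsub : Set.range f ⊆ {B | ∃ x, blockOf diagLineSet x n = B} := by
    rintro B ⟨p, rfl⟩; exact ⟨_, rfl⟩
  have h1 : (Set.range f).ncard = n ^ 2 := by
    rw [← Nat.card_coe_set_eq, Nat.card_range_of_injective hinj]
    simp [Nat.card_eq_fintype_card, sq]
  calc n ^ 2 = (Set.range f).ncard := h1.symm
    _ ≤ blockCount diagLineSet n := Set.ncard_le_ncard hsub hfin
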